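/- Fix β > 0. The series ∑_{k=1}^∞ ξ_β(k) converges and equals β; equivalently, a random variable X̄_β^P with distribution π_β^P has finite mean equal to β. -/
import Mathlib


/-- The tail sequence of the invariant distribution `π_β^P` of the mean-field limit
of the Power of Choice policy: `ξ_β(0) = 1` and
`ξ_β(x+1) = (−1 + √(1 + 4β²ξ_β(x)²))/(2β)`. -/
noncomputable def xi (β : ℝ) : ℕ → ℝ
  | 0 => 1
  | x + 1 => (-1 + Real.sqrt (1 + 4 * β ^ 2 * (xi β x) ^ 2)) / (2 * β)

lemma xi_pos (β : ℝ) (hβ : 0 < β) : ∀ n, 0 < xi β n := by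
  intro n
  induction n with
  | zero => norm_num [xi]
  | succ n ih =>
    have h1 : (1 : ℝ) < Real.sqrt (1 + 4 * β ^ 2 * (xi β n) ^ 2) := by
      rw [show (1:ℝ) < Real.sqrt (1 + 4 * β ^ 2 * (xi β n) ^ 2) ↔
          (1:ℝ)^2 < 1 + 4 * β ^ 2 * (xi β n) ^ 2 from Real.lt_sqrt (by norm_num)]
      nlinarith [mul_pos (pow_pos hβ 2) (pow_pos ih 2)]
    show 0 < (-1 + Real.sqrt (1 + 4 * β ^ 2 * (xi β n) ^ 2)) / (2 * β)
    apply div_pos (by linarith) (by linarith)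

lemma xi_rec (β : ℝ) (hβ : 0 < β) (n : ℕ) :
    xi β (n + 1) = β * ((xi β n) ^ 2 - (xi β (n + 1)) ^ 2) := by
  have hs : Real.sqrt (1 + 4 * β ^ 2 * (xi β n) ^ 2) ^ 2
      = 1 + 4 * β ^ 2 * (xi β n) ^ 2 := Real.sq_sqrt (by positivity)
  have h : xi β (n + 1) = (-1 + Real.sqrt (1 + 4 * β ^ 2 * (xi β n) ^ 2)) / (2 * β) := rfl
  have hb : (2 : ℝ) * β ≠ 0 := by positivity
  rw [eq_div_iff hb] at h
  have key : 4 * β ^ 2 * (xi β (n + 1)) ^ 2 + 4 * β * (xi β (n + 1))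
      = 4 * β ^ 2 * (xi β n) ^ 2 := by
    linear_combination h * (xi β (n + 1) * (2 * β) + 1
      + Real.sqrt (1 + 4 * β ^ 2 * (xi β n) ^ 2)) + hs
  have h4 : β * (xi β (n + 1) - β * ((xi β n) ^ 2 - (xi β (n + 1)) ^ 2)) = 0 := by
    linear_combination key / 4
  rcases mul_eq_zero.mp h4 with h5 | h5
  · exact absurd h5 hβ.ne'
  · linarith

lemma xi_anti (β : ℝ) (hβ : 0 < β) : StrictAnti (xi β) := by
  apply strictAnti_nat_of_succ_lt
  intro n
  have h := xi_rec β hβ n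
  have h1 := xi_pos β hβ n
  have h2 := xi_pos β hβ (n + 1)
  have h3 : 0 < β * ((xi β n) ^ 2 - (xi β (n + 1)) ^ 2) := h ▸ h2
  have h4 : (xi β (n + 1)) ^ 2 < (xi β n) ^ 2 := by nlinarith
  exact lt_of_pow_lt_pow_left₀ 2 h1.le h4

lemma xi_tendsto_zero (β : ℝ) (hβ : 0 < β) :
    Filter.Tendsto (xi β) Filter.atTop (nhds 0) := by
  have hbdd : BddBelow (Set.range (xi β)) :=
    ⟨0, fun x ⟨n, hn⟩ => hn ▸ (xi_pos β hβ n).le⟩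
  have hL := tendsto_atTop_ciInf (xi_anti β hβ).antitone hbdd
  set L := ⨅ n, xi β n with hLdef
  have hL1 : Filter.Tendsto (fun n => xi β (n + 1)) Filter.atTop (nhds L) :=
    hL.comp (Filter.tendsto_add_atTop_nat 1)
  have hL2 : Filter.Tendsto (fun n => β * ((xi β n) ^ 2 - (xi β (n + 1)) ^ 2))
      Filter.atTop (nhds (β * (L ^ 2 - L ^ 2))) :=
    Filter.Tendsto.const_mul β ((hL.pow 2).sub (hL1.pow 2))
  have heq : (fun n => xi β (n + 1)) = fun n => β * ((xi β n) ^ 2 - (xi β (n + 1)) ^ 2) := by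
    funext n; exact xi_rec β hβ n
  rw [heq] at hL1
  have : L = β * (L ^ 2 - L ^ 2) := tendsto_nhds_unique hL1 hL2
  have hL0 : L = 0 := by nlinarith
  rw [← hL0]; exact hL

lemma xi_partial_sum (β : ℝ) (hβ : 0 < β) (n : ℕ) :
    ∑ k ∈ Finset.range n, xi β (k + 1) = β * (1 - (xi β n) ^ 2) := by
  induction n with
  | zero => simp [xi]
  | succ n ih =>
    rw [Finset.sum_range_succ, ih]
    linear_combination xi_rec β hβ n

/-- The series `∑_{k=1}^∞ ξ_β(k)` converges and equals `β`; equivalently a random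
variable with distribution `π_β^P` has finite mean equal to `β`. -/
theorem xi_sum_eq_beta (β : ℝ) (hβ : 0 < β) :
    HasSum (fun k : ℕ => xi β (k + 1)) β := by
  rw [hasSum_iff_tendsto_nat_of_nonneg (fun k => (xi_pos β hβ (k + 1)).le)]
  have heq : (fun n => ∑ k ∈ Finset.range n, xi β (k + 1))
      = fun n => β * (1 - (xi β n) ^ 2) := by
    funext n; exact xi_partial_sum β hβ n
  rw [heq]
  have : Filter.Tendsto (fun n => β * (1 - (xi β n) ^ 2)) Filter.atTop
      (nhds (β * (1 - (0:ℝ) ^ 2))) :=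
    Filter.Tendsto.const_mul β (tendsto_const_nhds.sub ((xi_tendsto_zero β hβ).pow 2))
  simpa using this
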